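/- Every permutation π of {1,...,d} consisting of a single d-cycle can be transformed into the full forward cycle (1 2 ... d) by a finite sequence of conjugations by adjacent transpositions τ = (j, j+1), where at each step the current permutation σ satisfies σ(j) ≠ j+1. -/

import Mathlib

open Equiv Finset
open scoped Fin.NatCast Fin.CommRing

/-- A nice Coxeter conjugation step: `σ' = τ σ τ⁻¹` for an adjacent
transposition `τ = (j, j+1)` with `σ j ≠ j+1`. -/
def NiceStep {d : ℕ} (σ σ' : Equiv.Perm (Fin d)) : Prop :=
  ∃ j j1 : Fin d, (j1 : ℕ) = (j : ℕ) + 1 ∧ σ j ≠ j1 ∧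
    σ' = Equiv.swap j j1 * σ * (Equiv.swap j j1)⁻¹

/-- The inversion count of a map on `Fin d`. -/
private def Minv' {d : ℕ} (g : Fin d → Fin d) : ℕ :=
  ((Finset.univ : Finset (Fin d × Fin d)).filter fun p => p.1 < p.2 ∧ g p.2 < g p.1).card

/-- Swapping an adjacent descent strictly decreases the inversion count. -/
private lemma M_lt' {d : ℕ} (g : Fin d → Fin d)
    (j j1 : Fin d) (hj : (j1 : ℕ) = (j : ℕ) + 1) (hd : g j1 < g j) :
    Minv' (g ∘ (Equiv.swap j j1)) < Minv' g := by
  set τ := Equiv.swap j j1 with hτ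
  have hjj1 : j < j1 := by rw [Fin.lt_def]; omega
  have key : ∀ a b : Fin d, a < b → (a, b) ≠ (j, j1) → τ a < τ b := by
    intro a b hab hne
    have hne' : ¬(a = j ∧ b = j1) := by simpa [Prod.ext_iff] using hne
    rw [Fin.lt_def] at hab ⊢
    rw [hτ, Equiv.swap_apply_def, Equiv.swap_apply_def]
    split_ifs <;> simp_all [Fin.ext_iff] <;> omega
  set S := ((Finset.univ : Finset (Fin d × Fin d)).filter
      fun p => p.1 < p.2 ∧ g p.2 < g p.1) with hS
  set T := ((Finset.univ : Finset (Fin d × Fin d)).filter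
      fun p => p.1 < p.2 ∧ (g ∘ τ) p.2 < (g ∘ τ) p.1) with hT
  have hmemS : (j, j1) ∈ S := by
    simp only [hS, Finset.mem_filter, Finset.mem_univ, true_and]
    exact ⟨hjj1, hd⟩
  have hsub : T.image (Prod.map τ τ) ⊆ S.erase (j, j1) := by
    intro p hp
    simp only [Finset.mem_image] at hp
    obtain ⟨⟨a, b⟩, hmem, rfl⟩ := hp
    simp only [hT, Finset.mem_filter, Finset.mem_univ, true_and, Function.comp] at hmem
    obtain ⟨hab, hgab⟩ := hmem
    have hne : (a, b) ≠ (j, j1) := by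
      rintro h
      rw [Prod.ext_iff] at h
      obtain ⟨rfl, rfl⟩ := h
      rw [Equiv.swap_apply_left, Equiv.swap_apply_right] at hgab
      exact absurd hgab (lt_asymm hd)
    refine Finset.mem_erase.mpr ⟨?_, ?_⟩
    · intro h
      rw [Prod.ext_iff] at h
      obtain ⟨h1, h2⟩ := h
      simp only [Prod.map_apply] at h1 h2
      have ha : a = j1 := by
        have := congrArg τ h1; rwa [hτ, Equiv.swap_apply_self, Equiv.swap_apply_left] at this
      have hb : b = j := by
        have := congrArg τ h2; rwa [hτ, Equiv.swap_apply_self, Equiv.swap_apply_right] at this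
      rw [ha, hb] at hab
      exact absurd hab (not_lt.mpr (le_of_lt hjj1))
    · simp only [hS, Finset.mem_filter, Finset.mem_univ, true_and, Prod.map_apply]
      exact ⟨key a b hab hne, hgab⟩
  have hinj : Function.Injective (Prod.map τ τ : Fin d × Fin d → Fin d × Fin d) :=
    Function.Injective.prodMap τ.injective τ.injective
  calc Minv' (g ∘ τ) = T.card := rfl
    _ = (T.image (Prod.map τ τ)).card := (Finset.card_image_of_injective _ hinj).symm
    _ ≤ (S.erase (j, j1)).card := Finset.card_le_card hsub
    _ < S.card := Finset.card_erase_lt_of_mem hmemS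

private lemma finRotate_pow_apply' {m : ℕ} (k : ℕ) (x : Fin (m + 1)) :
    ((finRotate (m + 1)) ^ k) x = x + (k : Fin (m + 1)) := by
  induction k with
  | zero => simp
  | succ n ih =>
    rw [pow_succ', Equiv.Perm.mul_apply, finRotate_succ_apply, Nat.cast_succ]
    rw [ih]
    ring

private lemma eq_one_of_strictMono' {d : ℕ} (e : Equiv.Perm (Fin d))
    (h : StrictMono ⇑e⁻¹) : e = 1 := by
  haveI : WellFoundedLT (Fin d) := inferInstance
  have hr : Set.range ⇑e⁻¹ = Set.range (id : Fin d → Fin d) := by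
    rw [Set.range_id, Equiv.range_eq_univ]
  have hid : ⇑e⁻¹ = id := (h.range_inj strictMono_id).mp hr
  have : e⁻¹ = 1 := Equiv.ext fun x => congrFun hid x
  rwa [inv_eq_one] at this

private lemma exists_descent' {m : ℕ} (f : Fin (m + 1) → Fin (m + 1))
    (hinj : Function.Injective f) (hns : ¬ StrictMono f) :
    ∃ j j1 : Fin (m + 1), (j1 : ℕ) = (j : ℕ) + 1 ∧ f j1 < f j := by
  by_contra h
  push_neg at h
  apply hns
  rw [Fin.strictMono_iff_lt_succ]
  intro i
  have h1 : ((i.succ : Fin (m + 1)) : ℕ) = ((i.castSucc : Fin (m + 1)) : ℕ) + 1 := by simp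
  have h2 := h i.castSucc i.succ h1
  have h3 : f i.castSucc ≠ f i.succ := fun hh =>
    (ne_of_lt (Fin.castSucc_lt_succ (i := i))) (hinj hh)
  exact lt_of_le_of_ne h2 h3

/-- Main induction: any conjugate `e (finRotate) e⁻¹` with `e 0 = 0` reaches
`finRotate` by nice steps, by induction on the inversion count of `e⁻¹`. -/
private lemma aux_sort {m : ℕ} : ∀ (n : ℕ) (e : Equiv.Perm (Fin (m + 1))), e 0 = 0 →
    Minv' (⇑e⁻¹) ≤ n →
    Relation.ReflTransGen NiceStep (e * finRotate (m + 1) * e⁻¹) (finRotate (m + 1)) := by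
  intro n
  induction n with
  | zero =>
    intro e h0 hM
    have he : e = 1 := by
      apply eq_one_of_strictMono'
      intro a b hab
      have h : Minv' (⇑e⁻¹) = 0 := Nat.le_zero.mp hM
      rw [Minv', Finset.card_eq_zero, Finset.filter_eq_empty_iff] at h
      have := h (Finset.mem_univ (a, b))
      simp only [not_and, not_lt] at this
      exact lt_of_le_of_ne (this hab) fun hh => absurd (e⁻¹.injective hh) (ne_of_lt hab)
    rw [he]
    simp only [one_mul, inv_one, mul_one]
    exact Relation.ReflTransGen.refl
  | succ n ih =>
    intro e h0 hM
    by_cases he : e = 1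
    · rw [he]
      simp only [one_mul, inv_one, mul_one]
      exact Relation.ReflTransGen.refl
    · set f : Fin (m + 1) → Fin (m + 1) := ⇑e⁻¹ with hf
      have hinv0 : e⁻¹ 0 = 0 := by
        apply e.injective
        rw [show e (e⁻¹ 0) = 0 from e.apply_symm_apply 0, h0]
      have hns : ¬ StrictMono f := fun hsm => he (eq_one_of_strictMono' e hsm)
      obtain ⟨j, j1, hj, hdes⟩ := exists_descent' f e⁻¹.injective hns
      have hj1ne0 : j1 ≠ 0 := by
        intro h
        rw [h] at hj
        simp at hj
      have hjne0 : j ≠ 0 := by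
        intro h
        rw [h] at hdes
        rw [show f 0 = 0 from hinv0] at hdes
        exact absurd hdes (Fin.not_lt_zero _)
      set τ := Equiv.swap j j1 with hτ
      set r := finRotate (m + 1) with hr
      have hnice : (e * r * e⁻¹) j ≠ j1 := by
        intro hcon
        have hcon2 : r (f j) = f j1 := by
          have := congrArg (⇑e⁻¹) hcon
          simpa [Equiv.Perm.mul_apply, hf] using this
        rw [hr, finRotate_succ_apply] at hcon2
        have hval : ((f j + 1 : Fin (m + 1)) : ℕ) =
            if f j = Fin.last m then 0 else (f j : ℕ) + 1 := Fin.val_add_one _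
        rw [hcon2] at hval
        split_ifs at hval with hlast
        · have : f j1 = f 0 := by
            apply Fin.ext
            rw [hval]
            rw [show f 0 = 0 from hinv0]
            simp
          exact hj1ne0 (e⁻¹.injective this)
        · rw [Fin.lt_def] at hdes
          omega
      have hstep : NiceStep (e * r * e⁻¹) ((τ * e) * r * (τ * e)⁻¹) := by
        refine ⟨j, j1, hj, hnice, ?_⟩
        rw [hτ]
        group
      have h0' : (τ * e) 0 = 0 := by
        rw [Equiv.Perm.mul_apply, h0, hτ,
          Equiv.swap_apply_of_ne_of_ne (Ne.symm hjne0) (Ne.symm hj1ne0)]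
      have hfcomp : ⇑(τ * e)⁻¹ = f ∘ ⇑τ := by
        funext x
        simp [hτ, Equiv.Perm.mul_apply, hf]
      have hMle : Minv' (⇑(τ * e)⁻¹) ≤ n := by
        rw [hfcomp, hτ]
        have := M_lt' f j j1 hj hdes
        omega
      exact Relation.ReflTransGen.head hstep (ih (τ * e) h0' hMle)

/-- Any single `d`-cycle can be transformed into the full forward cycle
`(1 2 … d)` by a finite sequence of nice Coxeter conjugations. -/
theorem cycle_to_canonical (d : ℕ) (π : Equiv.Perm (Fin d))
    (hc : π.IsCycle) (hs : π.support.card = d) :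
    Relation.ReflTransGen NiceStep π (finRotate d) := by
  have h2 : 2 ≤ d := hs ▸ hc.two_le_card_support
  obtain ⟨m, rfl⟩ : ∃ m, d = m + 2 := ⟨d - 2, by omega⟩
  set r := finRotate (m + 2) with hr
  have hcr : r.IsCycle := isCycle_finRotate
  have hconj : IsConj π r := by
    apply hc.isConj hcr
    rw [hs, hr, support_finRotate, Finset.card_univ, Fintype.card_fin]
  obtain ⟨g, hg⟩ := isConj_iff.mp hconj
  have hπ : π = g⁻¹ * r * g := by rw [← hg]; group
  set k : ℕ := ((g 0 : Fin (m + 2)) : ℕ) with hk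
  set e : Equiv.Perm (Fin (m + 2)) := g⁻¹ * r ^ k with he
  have h0 : e 0 = 0 := by
    rw [he, Equiv.Perm.mul_apply]
    rw [show (r ^ k) 0 = 0 + (k : Fin (m + 2)) from finRotate_pow_apply' k 0]
    rw [zero_add, hk, Fin.cast_val_eq_self]
    exact g.symm_apply_apply 0
  have hdec : e * r * e⁻¹ = π := by
    rw [he, hπ]
    group
  rw [← hdec]
  exact aux_sort (Minv' ⇑e⁻¹) e h0 le_rfl
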